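/- Let G be an edge-coloured graph with all colour classes of size at most k and with no rainbow triangle. If W is a subset of the neighbourhood of some vertex w, then the number of edges of G with both endpoints in W is at most (k-1)|W|. -/

import Mathlib

open Finset


/-- In an edge-coloured graph with all colour classes of size at most `k`
and no rainbow triangle, if `W` is a subset of the neighbourhood of a vertex `w`, then the
number of edges with both endpoints in `W` is at most `(k-1)·|W|`. -/
theorem stmt5 {V : Type*} [Fintype V] [DecidableEq V] (G : SimpleGraph V)
    [DecidableRel G.Adj] (k : ℕ) (col : Sym2 V → ℕ)
    (hclass : ∀ i : ℕ, (G.edgeFinset.filter (fun e => col e = i)).card ≤ k)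
    (hrb : ¬ ∃ x y z : V, G.Adj x y ∧ G.Adj y z ∧ G.Adj x z ∧
      col s(x, y) ≠ col s(y, z) ∧ col s(y, z) ≠ col s(x, z) ∧ col s(x, y) ≠ col s(x, z))
    (w : V) (W : Finset V) (hW : ∀ v ∈ W, G.Adj w v) :
    (G.edgeFinset.filter (fun e => ∀ v ∈ e, v ∈ W)).card ≤ (k - 1) * W.card := by
  classical
  push_neg at hrb
  set S := G.edgeFinset.filter (fun e => ∀ v ∈ e, v ∈ W) with hSdef
  have hwW : w ∉ W := fun hw => G.irrefl (hW w hw)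
  set P : Sym2 V → V × V → Prop := fun e p =>
    p.1 ∈ W ∧ p.2 ∈ W ∧ e = s(p.1, p.2) ∧
      (col e = col s(w, p.1) ∨ col s(w, p.2) = col s(w, p.1)) with hPdef
  have hP : ∀ e ∈ S, ∃ p, P e p := by
    intro e he
    simp only [hSdef, mem_filter, SimpleGraph.mem_edgeFinset] at he
    obtain ⟨hadj, hmem⟩ := he
    induction e using Sym2.ind with
    | _ x y =>
      have hx : x ∈ W := hmem x (by simp)
      have hy : y ∈ W := hmem y (by simp)
      rw [SimpleGraph.mem_edgeSet] at hadj
      by_cases h1 : col s(x, y) = col s(w, x)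
      · exact ⟨(x, y), hx, hy, rfl, Or.inl h1⟩
      by_cases h2 : col s(x, y) = col s(w, y)
      · exact ⟨(y, x), hy, hx, Sym2.eq_swap, Or.inl h2⟩
      · -- triangle x, w, y : col s(x,w) = col s(w,y)
        have hxw : G.Adj x w := ((hW x hx).symm)
        have hwy : G.Adj w y := hW y hy
        by_cases h3 : col s(x, w) = col s(w, y)
        · refine ⟨(x, y), hx, hy, rfl, Or.inr ?_⟩
          rw [show s(w, x) = s(x, w) from Sym2.eq_swap] at *
          exact h3.symm
        · have h4 : col s(w, y) ≠ col s(x, y) := fun h => h2 h.symm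
          have := hrb x w y hxw hwy hadj h3 h4
          rw [show s(x, w) = s(w, x) from Sym2.eq_swap] at this
          exact absurd this.symm h1
  set pick : Sym2 V → V × V := fun e => if h : ∃ p, P e p then h.choose else (w, w)
    with hpickdef
  have hpick : ∀ e ∈ S, P e (pick e) := by
    intro e he
    have h := hP e he
    simp only [hpickdef, dif_pos h]
    exact h.choose_spec
  have wnotin : ∀ e ∈ S, w ∉ e := by
    intro e he hwe
    simp only [hSdef, mem_filter] at he
    exact hwW (he.2 w hwe)
  calc S.card = ∑ v ∈ W, (S.filter (fun e => (pick e).1 = v)).card := by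
        apply card_eq_sum_card_fiberwise
        intro e he
        exact (hpick e he).1
    _ ≤ ∑ v ∈ W, (k - 1) := by
        apply sum_le_sum
        intro v hv
        set T := ((G.edgeFinset.filter (fun e => col e = col s(w, v))).erase s(w, v)) with hT
        have hcard : T.card ≤ k - 1 := by
          rw [hT, card_erase_of_mem]
          · exact Nat.sub_le_sub_right (hclass _) 1
          · refine mem_filter.mpr ⟨?_, rfl⟩
            exact SimpleGraph.mem_edgeFinset.mpr (hW v hv)
        refine le_trans (card_le_card_of_injOn
          (fun e => if col e = col s(w, v) then e else s(w, (pick e).2)) ?_ ?_) hcard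
        · intro e he
          simp only [Finset.mem_coe, mem_filter] at he
          obtain ⟨heS, hev⟩ := he
          obtain ⟨hp1, hp2, hpe, hpc⟩ := hpick e heS
          rw [hev] at hpe hpc
          have hwe := wnotin e heS
          show (if col e = col s(w, v) then e else s(w, (pick e).2)) ∈ T
          have hne : v ≠ (pick e).2 := by
            rintro rfl
            have : e ∈ G.edgeFinset := (mem_filter.mp heS).1
            rw [SimpleGraph.mem_edgeFinset, hpe, SimpleGraph.mem_edgeSet] at this
            exact G.irrefl this
          by_cases hc : col e = col s(w, v)
          · rw [if_pos hc, hT, mem_erase]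
            refine ⟨?_, ?_⟩
            · rintro rfl; exact hwe (by simp)
            · simp only [mem_filter]
              exact ⟨(mem_filter.mp heS).1, hc⟩
          · rw [if_neg hc, hT, mem_erase]
            have hc2 : col s(w, (pick e).2) = col s(w, v) := by
              rcases hpc with h | h
              · exact absurd h hc
              · exact h
            refine ⟨?_, ?_⟩
            · intro h
              rw [Sym2.congr_right] at h
              exact hne h.symm
            · simp only [mem_filter, SimpleGraph.mem_edgeFinset, SimpleGraph.mem_edgeSet]
              exact ⟨hW _ hp2, hc2⟩
        · intro e he e' he' heq
          simp only [Finset.mem_coe, mem_filter] at he he'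
          obtain ⟨heS, hev⟩ := he
          obtain ⟨heS', hev'⟩ := he'
          obtain ⟨hp1, hp2, hpe, hpc⟩ := hpick e heS
          obtain ⟨hp1', hp2', hpe', hpc'⟩ := hpick e' heS'
          rw [hev] at hpe
          rw [hev'] at hpe'
          have hwe := wnotin e heS
          have hwe' := wnotin e' heS'
          have heq : (if col e = col s(w, v) then e else s(w, (pick e).2))
              = (if col e' = col s(w, v) then e' else s(w, (pick e').2)) := heq
          by_cases hc : col e = col s(w, v) <;> by_cases hc' : col e' = col s(w, v)
          · rwa [if_pos hc, if_pos hc'] at heq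
          · rw [if_pos hc, if_neg hc'] at heq
            exact absurd (heq ▸ (Sym2.mem_mk_left w (pick e').2)) hwe
          · rw [if_neg hc, if_pos hc'] at heq
            exact absurd (heq ▸ Sym2.mem_mk_left w (pick e).2) hwe'
          · rw [if_neg hc, if_neg hc'] at heq
            rw [Sym2.congr_right] at heq
            rw [hpe, hpe', heq]
    _ = (k - 1) * W.card := by rw [sum_const, smul_eq_mul, mul_comm]
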